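/- Let ℕ carry the metric inherited from ℝ with base point 0, and regard S¹ as the unit circle in ℂ. Define f : ℕ → S¹ by f(2n) = exp(i/√n) for n ≥ 1 and f(k) = 1 for all other k (i.e. for k odd and for k = 0). Then the function f' : ℕ → ℂ defined by f'(n) = n·f(n) is not asymptotically Lipschitz, yet f is Higson sublinear. -/

import Mathlib

/-- A function `s : [0,∞) → [0,∞)` is *asymptotically sublinear* if it is continuous,
nonnegative on `[0,∞)`, and for each non-constant linear function `r ↦ a·r + c`
(`a > 0`, `c ≥ 0`) there is `M ≥ 0` with `s(r) ≤ a·r + c + M` for all `r ≥ 0`. -/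
def AsympSublinear (s : ℝ → ℝ) : Prop :=
  ContinuousOn s (Set.Ici 0) ∧ (∀ r : ℝ, 0 ≤ r → 0 ≤ s r) ∧
  ∀ a : ℝ, 0 < a → ∀ c : ℝ, 0 ≤ c → ∃ M : ℝ, 0 ≤ M ∧
    ∀ r : ℝ, 0 ≤ r → s r ≤ a * r + c + M

/-- `f : X → Y` is *Higson sublinear* (with base point `x₀`) if for every asymptotically
sublinear `s` and all sequences `xₙ, yₙ → ∞` with `d(xₙ,yₙ) ≤ s(|xₙ|)`, one has
`d(f xₙ, f yₙ) → 0`. -/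
def HigsonSublinear {X Y : Type*} [MetricSpace X] [MetricSpace Y] (x₀ : X) (f : X → Y) :
    Prop :=
  ∀ s : ℝ → ℝ, AsympSublinear s →
    ∀ x y : ℕ → X,
      Filter.Tendsto (fun n => dist (x n) x₀) Filter.atTop Filter.atTop →
      Filter.Tendsto (fun n => dist (y n) x₀) Filter.atTop Filter.atTop →
      (∀ n, dist (x n) (y n) ≤ s (dist (x n) x₀)) →
      Filter.Tendsto (fun n => dist (f (x n)) (f (y n))) Filter.atTop (nhds 0)

lemma im_I_div_sqrt (n : ℕ) (hn : 1 ≤ n) :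
    (Complex.I / (Real.sqrt n : ℂ)).im = 1 / Real.sqrt n := by
  have h : (0:ℝ) < Real.sqrt n := Real.sqrt_pos.2 (by exact_mod_cast hn)
  rw [Complex.div_im]
  simp [Complex.normSq_ofReal]
  field_simp
  exact Real.sq_sqrt (by positivity)

lemma re_I_div_sqrt (n : ℕ) : (Complex.I / (Real.sqrt n : ℂ)).re = 0 := by
  simp [Complex.div_re]

lemma tendsto_four_div_sqrt :
    Filter.Tendsto (fun k : ℕ => 4 / Real.sqrt k) Filter.atTop (nhds 0) := by
  have h : Filter.Tendsto (fun k : ℕ => (Real.sqrt k)⁻¹) Filter.atTop (nhds 0) := by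
    have := (Real.continuous_sqrt.tendsto 0).comp
      (tendsto_inv_atTop_zero.comp (tendsto_natCast_atTop_atTop (R := ℝ)))
    simpa [Function.comp_def, Real.sqrt_inv] using this
  have := h.const_mul (4:ℝ)
  simp only [mul_zero] at this
  simpa [div_eq_mul_inv] using this

/-- for `f : ℕ → S¹ ⊂ ℂ` with `f(2n) = exp(i/√n)` for `n ≥ 1` and `f = 1`
elsewhere, the map `f'(n) = n·f(n)` is not asymptotically Lipschitz, yet `f` is Higson
sublinear (base point `0 ∈ ℕ`). -/
theorem stmt_17 (f : ℕ → ℂ)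
    (h1 : ∀ n : ℕ, 1 ≤ n → f (2 * n) = Complex.exp (Complex.I / (Real.sqrt n : ℂ)))
    (h2 : ∀ n : ℕ, Odd n → f n = 1) (h3 : f 0 = 1) :
    (¬ ∃ lam M : ℝ, 0 ≤ lam ∧ 0 ≤ M ∧
        ∀ x y : ℕ, ‖(x : ℂ) * f x - (y : ℂ) * f y‖ ≤ lam * dist x y + M) ∧
    HigsonSublinear (0 : ℕ) f := by
  constructor
  · -- not asymptotically Lipschitz
    rintro ⟨lam, M, hlam, hM, hspec⟩
    set m : ℕ := ⌈lam + M⌉₊ + 1 with hm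
    set n : ℕ := m ^ 2 with hndef
    have hm1 : 1 ≤ m := by omega
    have hn1 : 1 ≤ n := Nat.one_le_pow _ _ (by omega)
    set r : ℝ := Real.sqrt n with hrdef
    have hrm : r = (m : ℝ) := by
      rw [hrdef, hndef]; push_cast; exact Real.sqrt_sq (by positivity)
    have hr1 : (1:ℝ) ≤ r := by rw [hrm]; exact_mod_cast hm1
    have hr0 : (0:ℝ) < r := lt_of_lt_of_le one_pos hr1
    have hr2 : r * r = (n : ℝ) := Real.mul_self_sqrt (by positivity)
    have hrlam : lam + M + 1 ≤ r := by
      rw [hrm, hm]; push_cast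
      have := Nat.le_ceil (lam + M)
      linarith
    -- the distance between 2n and 2n+1 is 1
    have hdist : dist (2 * n) (2 * n + 1) = 1 := by
      rw [Nat.dist_eq]; push_cast; rw [abs_of_nonpos (by linarith)]; ring
    have hodd : f (2 * n + 1) = 1 := h2 _ ⟨n, by ring⟩
    have heven : f (2 * n) = Complex.exp (Complex.I / (Real.sqrt n : ℂ)) := h1 n hn1
    set z : ℂ := Complex.I / (Real.sqrt n : ℂ) with hz
    set x : ℝ := 1 / r with hxdef
    have hx0 : 0 < x := by positivity
    have hx1 : x ≤ 1 := by rw [hxdef]; rw [div_le_one hr0]; exact hr1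
    have hsin : x - x ^ 3 / 4 < Real.sin x := by have := Real.sin_gt_sub_cube hx0; linarith [pow_pos hx0 3]
    have hzim : z.im = x := im_I_div_sqrt n hn1
    have hzre : z.re = 0 := re_I_div_sqrt n
    -- the imaginary part of the tested difference
    have him : ((2 * n : ℕ) * f (2 * n) - ((2 * n + 1 : ℕ) : ℂ) * f (2 * n + 1)).im
        = 2 * (n : ℝ) * Real.sin x := by
      rw [hodd, heven]
      simp [Complex.sub_im, Complex.mul_im, Complex.exp_im, hzre, hzim]
    have habs := hspec (2 * n) (2 * n + 1)
    rw [hdist] at habs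
    have hge : 2 * (n : ℝ) * Real.sin x ≤ ‖
        ((2 * n : ℕ) * f (2 * n) - ((2 * n + 1 : ℕ) : ℂ) * f (2 * n + 1))‖ := by
      calc 2 * (n : ℝ) * Real.sin x
          = ((2 * n : ℕ) * f (2 * n) - ((2 * n + 1 : ℕ) : ℂ) * f (2 * n + 1)).im := him.symm
        _ ≤ |((2 * n : ℕ) * f (2 * n) - ((2 * n + 1 : ℕ) : ℂ) * f (2 * n + 1)).im| :=
            le_abs_self _
        _ ≤ _ := Complex.abs_im_le_norm _
    have hval : 2 * (n : ℝ) * (x - x ^ 3 / 4) = 2 * r - 1 / (2 * r) := by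
      rw [hxdef, ← hr2]; field_simp; ring
    have hsin' : 2 * r - 1 / (2 * r) < 2 * (n : ℝ) * Real.sin x := by
      rw [← hval]
      have hn0 : (0:ℝ) < (n : ℝ) := by exact_mod_cast hn1
      nlinarith
    have hsmall : 1 / (2 * r) ≤ 1 / 2 := by
      apply one_div_le_one_div_of_le <;> linarith
    linarith
  · -- Higson sublinear
    intro s _hs x y hx hy _hxy
    -- key bound: |f k - 1| ≤ 4 / √k
    have key : ∀ k : ℕ, ‖f k - 1‖ ≤ 4 / Real.sqrt k := by
      intro k
      rcases Nat.even_or_odd k with ⟨j, hj⟩ | hodd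
      · rcases Nat.eq_zero_or_pos j with rfl | hj1
        · have hk0 : k = 0 := by omega
          rw [hk0, h3, sub_self, norm_zero]
          positivity
        · have hk : k = 2 * j := by omega
          have hr0 : (0:ℝ) < Real.sqrt j := Real.sqrt_pos.2 (by exact_mod_cast hj1)
          have hr1 : (1:ℝ) ≤ Real.sqrt j := by
            rw [show (1:ℝ) = Real.sqrt 1 by simp]
            exact Real.sqrt_le_sqrt (by exact_mod_cast hj1)
          have hzabs : ‖Complex.I / (Real.sqrt j : ℂ)‖ = 1 / Real.sqrt j := by
            rw [norm_div, Complex.norm_I, Complex.norm_real, Real.norm_eq_abs,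
              abs_of_nonneg (Real.sqrt_nonneg _)]
          have hb : ‖f k - 1‖ ≤ 2 * (1 / Real.sqrt j) := by
            rw [hk, h1 j hj1, ← hzabs]
            exact Complex.norm_exp_sub_one_le (by rw [hzabs]; rw [div_le_one hr0]; exact hr1)
          have hsq : Real.sqrt k ≤ 2 * Real.sqrt j := by
            rw [show (2:ℝ) * Real.sqrt j = Real.sqrt 4 * Real.sqrt j by
                  rw [show (4:ℝ) = 2 ^ 2 by norm_num, Real.sqrt_sq (by norm_num)],
              ← Real.sqrt_mul (by norm_num)]
            apply Real.sqrt_le_sqrt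
            rw [hk]; push_cast; linarith [Nat.cast_nonneg (α := ℝ) j]
          have hk0 : (0:ℝ) < Real.sqrt k := by
            rw [Real.sqrt_pos]; exact_mod_cast Nat.pos_of_ne_zero (by omega)
          calc ‖f k - 1‖ ≤ 2 * (1 / Real.sqrt j) := hb
            _ = 2 / Real.sqrt j := by ring
            _ ≤ 4 / Real.sqrt k := by
                rw [div_le_div_iff₀ hr0 hk0]; linarith
      · rw [h2 k hodd]; simp; positivity
    -- sequences go to infinity in ℕ
    have hcoe : ∀ a : ℕ → ℕ,
        Filter.Tendsto (fun n => dist (a n) (0:ℕ)) Filter.atTop Filter.atTop →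
        Filter.Tendsto (fun n => ‖f (a n) - 1‖) Filter.atTop (nhds 0) := by
      intro a ha
      have ha' : Filter.Tendsto a Filter.atTop Filter.atTop := by
        rw [← tendsto_natCast_atTop_iff (R := ℝ)]
        have : (fun n => dist (a n) (0:ℕ)) = fun n => ((a n : ℝ)) := by
          funext n; rw [Nat.dist_eq]; simp
        rwa [this] at ha
      have hlim := tendsto_four_div_sqrt.comp ha'
      exact squeeze_zero (fun n => norm_nonneg _) (fun n => key (a n)) hlim
    have hX := hcoe x hx
    have hY := hcoe y hy
    have hsum := hX.add hY
    rw [add_zero] at hsum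
    apply squeeze_zero (fun n => dist_nonneg) _ hsum
    intro n
    calc dist (f (x n)) (f (y n)) ≤ dist (f (x n)) 1 + dist 1 (f (y n)) := dist_triangle _ _ _
      _ = ‖f (x n) - 1‖ + ‖f (y n) - 1‖ := by
          rw [Complex.dist_eq, dist_comm, Complex.dist_eq]
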